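/- Suppose there exists q⁺ > 0 with q_{ik} ≥ q⁺ for all i, k. Then ∏_{k=1}^∞ ∑_i √(p_{ik} q_{ik}) > 0 if and only if ∑_{k=1}^∞ ∑_i (1 - p_{ik}/q_{ik})² q_{ik}² < ∞ (equivalently, ∑_k ∑_i (q_{ik} - p_{ik})² < ∞). -/

import Mathlib

open MeasureTheory Filter Finset Topology

/-- For a sequence in `(0,1]`, the partial products are bounded below by a positive
constant iff `∑ (1 - aₖ)` is summable. -/
lemma prod_pos_iff_summable_aux (a : ℕ → ℝ) (ha0 : ∀ k, 0 < a k) (ha1 : ∀ k, a k ≤ 1) :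
    (∃ c > 0, ∀ n, c ≤ ∏ k ∈ Finset.range n, a k) ↔ Summable (fun k => 1 - a k) := by
  have hg0 : ∀ k, 0 ≤ -Real.log (a k) := by
    intro k
    simpa using Real.log_nonpos (le_of_lt (ha0 k)) (ha1 k)
  have hlogP : ∀ n, Real.log (∏ k ∈ Finset.range n, a k)
      = ∑ k ∈ Finset.range n, Real.log (a k) := by
    intro n
    exact Real.log_prod (fun k _ => (ha0 k).ne')
  constructor
  · rintro ⟨c, hc, hP⟩
    refine summable_of_sum_range_le (c := -Real.log c)
      (fun k => by linarith [ha1 k]) (fun n => ?_)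
    have h1 : ∀ k, 1 - a k ≤ -Real.log (a k) := by
      intro k
      have := Real.log_le_sub_one_of_pos (ha0 k)
      linarith
    calc ∑ k ∈ Finset.range n, (1 - a k)
        ≤ ∑ k ∈ Finset.range n, -Real.log (a k) :=
          Finset.sum_le_sum (fun k _ => h1 k)
      _ = -Real.log (∏ k ∈ Finset.range n, a k) := by
          rw [hlogP]; rw [Finset.sum_neg_distrib]
      _ ≤ -Real.log c := by
          have := Real.log_le_log hc (hP n)
          linarith
  · intro hs
    -- eventually a k ≥ 1/2
    have htend : Tendsto (fun k => 1 - a k) atTop (𝓝 0) := hs.tendsto_atTop_zero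
    obtain ⟨K, hK⟩ := (htend.eventually (gt_mem_nhds (by norm_num : (0:ℝ) < 1/2))).exists_forall_of_atTop
    -- for k ≥ K, -log (a k) ≤ 2 * (1 - a k)
    have hlog2 : ∀ k ≥ K, -Real.log (a k) ≤ 2 * (1 - a k) := by
      intro k hk
      have h2 : 1/2 < a k := by have := hK k hk; linarith
      have hinv : Real.log (a k)⁻¹ ≤ (a k)⁻¹ - 1 :=
        Real.log_le_sub_one_of_pos (inv_pos.2 (ha0 k))
      rw [Real.log_inv] at hinv
      have hinvle : (a k)⁻¹ ≤ 2 := by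
        rw [inv_le_comm₀ (ha0 k) (by norm_num)]
        linarith
      have heq : (a k)⁻¹ - 1 = (1 - a k) * (a k)⁻¹ := by
        field_simp
      have h3 : (1 - a k) * (a k)⁻¹ ≤ (1 - a k) * 2 :=
        mul_le_mul_of_nonneg_left hinvle (by linarith [ha1 k])
      linarith
    set T : ℝ := ∑' k, (1 - a k) with hT
    set M : ℝ := (∑ k ∈ Finset.range K, -Real.log (a k)) + 2 * T with hM
    have hbound : ∀ n, ∑ k ∈ Finset.range n, -Real.log (a k) ≤ M := by
      intro n
      have hmono : ∑ k ∈ Finset.range n, -Real.log (a k)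
          ≤ ∑ k ∈ Finset.range (max n K), -Real.log (a k) :=
        Finset.sum_le_sum_of_subset_of_nonneg
          (Finset.range_subset_range.2 (le_max_left _ _)) (fun k _ _ => hg0 k)
      have hsplit : Finset.range (max n K) = Finset.range K ∪ Finset.Ico K (max n K) := by
        rw [Finset.range_eq_Ico, Finset.range_eq_Ico]
        exact (Finset.Ico_union_Ico_eq_Ico (Nat.zero_le _) (le_max_right _ _)).symm
      have htail : ∑ k ∈ Finset.Ico K (max n K), -Real.log (a k) ≤ 2 * T := by
        calc ∑ k ∈ Finset.Ico K (max n K), -Real.log (a k)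
            ≤ ∑ k ∈ Finset.Ico K (max n K), 2 * (1 - a k) :=
              Finset.sum_le_sum (fun k hk => hlog2 k (Finset.mem_Ico.1 hk).1)
          _ = 2 * ∑ k ∈ Finset.Ico K (max n K), (1 - a k) := by
              rw [Finset.mul_sum]
          _ ≤ 2 * T := by
              refine mul_le_mul_of_nonneg_left ?_ (by norm_num)
              exact Summable.sum_le_tsum _ (fun k _ => by linarith [ha1 k]) hs
      calc ∑ k ∈ Finset.range n, -Real.log (a k)
          ≤ ∑ k ∈ Finset.range (max n K), -Real.log (a k) := hmono
        _ = ∑ k ∈ Finset.range K, -Real.log (a k)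
              + ∑ k ∈ Finset.Ico K (max n K), -Real.log (a k) := by
            rw [hsplit, Finset.sum_union]
            · rw [Finset.range_eq_Ico]
              exact Finset.Ico_disjoint_Ico_consecutive 0 K (max n K)
        _ ≤ M := by rw [hM]; linarith [htail]
    refine ⟨Real.exp (-M), Real.exp_pos _, fun n => ?_⟩
    have hPpos : 0 < ∏ k ∈ Finset.range n, a k :=
      Finset.prod_pos (fun k _ => ha0 k)
    have : -M ≤ Real.log (∏ k ∈ Finset.range n, a k) := by
      rw [hlogP]
      have := hbound n
      rw [Finset.sum_neg_distrib] at this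
      linarith
    calc Real.exp (-M) ≤ Real.exp (Real.log (∏ k ∈ Finset.range n, a k)) :=
          Real.exp_le_exp.2 this
      _ = _ := Real.exp_log hPpos

/-- Remark 3: if the entries `q_{ik}` are uniformly bounded below by `q⁺ > 0`, then
positivity of the infinite product of Hellinger affinities
`∏_k ∑_i √(p_{ik} q_{ik})` is equivalent to
`∑_k ∑_i (1 - p_{ik}/q_{ik})² q_{ik}² < ∞` (i.e. `∑_k ∑_i (q_{ik} - p_{ik})² < ∞`). -/
theorem affinity_product_pos_iff_summable (N : ℕ → ℕ)
    (p q : (k : ℕ) → Fin (N k + 1) → ℝ)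
    (hp : ∀ k i, 0 ≤ p k i) (hq : ∀ k i, 0 < q k i)
    (hps : ∀ k, ∑ i, p k i = 1) (hqs : ∀ k, ∑ i, q k i = 1)
    (qplus : ℝ) (hqplus : 0 < qplus) (hbound : ∀ k i, qplus ≤ q k i) :
    (∃ c > 0, ∀ n, c ≤ ∏ k ∈ Finset.range n, ∑ i, Real.sqrt (p k i * q k i)) ↔
      Summable (fun k => ∑ i, (1 - p k i / q k i) ^ 2 * (q k i) ^ 2) := by
  set a : ℕ → ℝ := fun k => ∑ i, Real.sqrt (p k i * q k i) with ha
  set S : ℕ → ℝ := fun k => ∑ i, (q k i - p k i) ^ 2 with hS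
  -- the target summand equals S
  have htarget : (fun k => ∑ i, (1 - p k i / q k i) ^ 2 * (q k i) ^ 2) = S := by
    funext k
    refine Finset.sum_congr rfl (fun i _ => ?_)
    have hqne : q k i ≠ 0 := (hq k i).ne'
    field_simp
  rw [htarget]
  -- bounds on entries
  have hple1 : ∀ k i, p k i ≤ 1 := by
    intro k i
    rw [← hps k]
    exact Finset.single_le_sum (fun j _ => hp k j) (Finset.mem_univ i)
  have hqle1 : ∀ k i, q k i ≤ 1 := by
    intro k i
    rw [← hqs k]
    exact Finset.single_le_sum (fun j _ => (hq k j).le) (Finset.mem_univ i)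
  -- key identity : 2 * (1 - a k) = ∑ (√q - √p)²
  have hkey : ∀ k, 2 * (1 - a k) = ∑ i, (Real.sqrt (q k i) - Real.sqrt (p k i)) ^ 2 := by
    intro k
    have : ∀ i, (Real.sqrt (q k i) - Real.sqrt (p k i)) ^ 2
        = q k i + p k i - 2 * Real.sqrt (p k i * q k i) := by
      intro i
      rw [sub_sq, Real.sq_sqrt (hq k i).le, Real.sq_sqrt (hp k i),
        Real.sqrt_mul (hp k i)]
      ring
    rw [Finset.sum_congr rfl (fun i _ => this i)]
    rw [Finset.sum_sub_distrib, Finset.sum_add_distrib, hps k, hqs k,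
      ← Finset.mul_sum]
    simp only [ha]
    ring
  -- pointwise comparison : (q-p)² = (√q-√p)² (√q+√p)², with qplus ≤ (√q+√p)² ≤ 4
  have hpoint : ∀ k i,
      qplus * (Real.sqrt (q k i) - Real.sqrt (p k i)) ^ 2 ≤ (q k i - p k i) ^ 2 ∧
      (q k i - p k i) ^ 2 ≤ 4 * (Real.sqrt (q k i) - Real.sqrt (p k i)) ^ 2 := by
    intro k i
    have hsp : Real.sqrt (p k i) ^ 2 = p k i := Real.sq_sqrt (hp k i)
    have hsq : Real.sqrt (q k i) ^ 2 = q k i := Real.sq_sqrt (hq k i).le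
    have hfac : (q k i - p k i) ^ 2
        = (Real.sqrt (q k i) - Real.sqrt (p k i)) ^ 2
          * (Real.sqrt (q k i) + Real.sqrt (p k i)) ^ 2 := by
      have hd : q k i - p k i
          = (Real.sqrt (q k i) - Real.sqrt (p k i))
            * (Real.sqrt (q k i) + Real.sqrt (p k i)) := by
        linear_combination hsp - hsq
      rw [hd, mul_pow]
    have hsum_lb : qplus ≤ (Real.sqrt (q k i) + Real.sqrt (p k i)) ^ 2 := by
      nlinarith [Real.sqrt_nonneg (p k i), Real.sqrt_nonneg (q k i), hbound k i]
    have hsum_ub : (Real.sqrt (q k i) + Real.sqrt (p k i)) ^ 2 ≤ 4 := by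
      have h1 : Real.sqrt (p k i) ≤ 1 := by
        rw [show (1:ℝ) = Real.sqrt 1 by simp]
        exact Real.sqrt_le_sqrt (hple1 k i)
      have h2 : Real.sqrt (q k i) ≤ 1 := by
        rw [show (1:ℝ) = Real.sqrt 1 by simp]
        exact Real.sqrt_le_sqrt (hqle1 k i)
      nlinarith [Real.sqrt_nonneg (p k i), Real.sqrt_nonneg (q k i)]
    constructor
    · rw [hfac]
      nlinarith [sq_nonneg (Real.sqrt (q k i) - Real.sqrt (p k i))]
    · rw [hfac]
      nlinarith [sq_nonneg (Real.sqrt (q k i) - Real.sqrt (p k i))]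
  -- comparison at the level of the sums over i
  have hScomp : ∀ k, qplus * (2 * (1 - a k)) ≤ S k ∧ S k ≤ 4 * (2 * (1 - a k)) := by
    intro k
    rw [hkey k]
    constructor
    · rw [Finset.mul_sum]
      exact Finset.sum_le_sum (fun i _ => (hpoint k i).1)
    · rw [Finset.mul_sum]
      exact Finset.sum_le_sum (fun i _ => (hpoint k i).2)
  have hS0 : ∀ k, 0 ≤ S k :=
    fun k => Finset.sum_nonneg (fun i _ => sq_nonneg _)
  have ha1 : ∀ k, a k ≤ 1 := by
    intro k
    have h := hkey k
    have : 0 ≤ ∑ i, (Real.sqrt (q k i) - Real.sqrt (p k i)) ^ 2 :=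
      Finset.sum_nonneg (fun i _ => sq_nonneg _)
    linarith
  have ha0 : ∀ k, 0 < a k := by
    intro k
    obtain ⟨i, hi⟩ := Finset.exists_ne_zero_of_sum_ne_zero
      (by rw [hps k]; norm_num : ∑ i, p k i ≠ 0)
    refine Finset.sum_pos' (fun j _ => Real.sqrt_nonneg _) ⟨i, Finset.mem_univ i, ?_⟩
    exact Real.sqrt_pos.2 (mul_pos (lt_of_le_of_ne (hp k i) (Ne.symm hi.2)) (hq k i))
  rw [prod_pos_iff_summable_aux a ha0 ha1]
  constructor
  · intro hs
    exact Summable.of_nonneg_of_le hS0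
      (fun k => by linarith [(hScomp k).2]) (hs.mul_left 8)
  · intro hs
    refine Summable.of_nonneg_of_le (fun k => by linarith [ha1 k])
      (fun k => ?_) (hs.mul_left (2 * qplus)⁻¹)
    have h1 := (hScomp k).1
    have h2 := mul_le_mul_of_nonneg_left h1
      (inv_nonneg.2 (by linarith : (0:ℝ) ≤ 2 * qplus))
    have key : (2 * qplus)⁻¹ * (qplus * (2 * (1 - a k))) = 1 - a k := by
      field_simp
    rw [← key]
    exact h2
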